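/- Let D be a canonical DBM over n clocks with D i i = 0 for all i, and let S ⊆ Fin (n+1) with 0 ∉ S. Then the reset matrix D[S := 0] is again canonical, i.e. it satisfies the triangle inequality; in particular no further Floyd–Warshall canonicalization is needed after a reset. -/
import Mathlib


open scoped Classical

/-- A DBM over `n` clocks: index `0` is the reference clock. -/
abbrev DBM (n : ℕ) := Fin (n + 1) → Fin (n + 1) → WithTop ℝ

/-- A DBM is canonical if it satisfies the triangle inequality. -/
def Canonical {n : ℕ} (D : DBM n) : Prop :=
  ∀ i j k, D i j ≤ D i k + D k j

/-- The reset matrix `D[S := 0]`. -/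
noncomputable def resetDBM {n : ℕ} (D : DBM n) (S : Set (Fin (n + 1))) : DBM n := fun j k =>
  if j ∈ S then (if k ∈ S then 0 else D 0 k)
  else (if k ∈ S then D j 0 else D j k)

/-- for a canonical DBM with zero diagonal, the reset matrix `D[S := 0]`
is again canonical (no further canonicalization is needed after a reset). -/
theorem reset_preserves_canonical {n : ℕ} (D : DBM n) (hD : Canonical D)
    (hdiag : ∀ i, D i i = 0)
    (S : Set (Fin (n + 1))) (h0 : (0 : Fin (n + 1)) ∉ S) :
    Canonical (resetDBM D S) := by
  intro i j k
  simp only [resetDBM]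
  split_ifs with hi hj hk hk hj hk hk <;>
    (try simp only [zero_add, add_zero]) <;>
    first
      | rfl
      | (calc (0 : WithTop ℝ) = D 0 0 := (hdiag 0).symm
          _ ≤ D 0 k + D k 0 := hD 0 0 k)
      | exact hD 0 j k
      | exact hD i 0 k
      | exact hD i j 0
      | exact hD i j k
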